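/- Let 2 ≤ r < a and l ≥ 2a−1. Any sub-hypergraph of the hyperwheel ^rW_l^a (viewed as an r-uniform hypergraph) containing no complete r-uniform hyperclique K_a^r has at most C(a−1, r−1)·(l−1) − ⌈(l−1)/(a−r+1)⌉ hyperedges. -/
import Mathlib


/-- The `a`-clique of the hyperwheel on `l` vertices (vertices `0,…,l-2` on the cycle,
center `l-1`) starting at cycle vertex `i`: `{i, i+1, …, i+a-2 (mod l-1)} ∪ {l-1}`. -/
def wheelClique (l a i : ℕ) : Finset ℕ :=
  insert (l - 1) ((Finset.range (a - 1)).image fun k => (i + k) % (l - 1))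

/-- The hyperedges of the `r`-uniform hyperwheel `^rW_l^a`: all `r`-subsets of the
cliques `wheelClique l a i` for `i` a cycle vertex. -/
def wheelEdges (r a l : ℕ) : Finset (Finset ℕ) :=
  (Finset.range (l - 1)).biUnion fun i => (wheelClique l a i).powersetCard r

/-- An `r`-uniform edge set is `K_a^r`-free if no `a`-set has all its `r`-subsets present. -/
def HyperCliqueFree (F : Finset (Finset ℕ)) (a r : ℕ) : Prop :=
  ¬ ∃ S : Finset ℕ, S.card = a ∧ S.powersetCard r ⊆ F

lemma mod_inj_aux {n x y i : ℕ} (hx : x < n) (hy : y < n)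
    (h : (i + x) % n = (i + y) % n) : x = y := by
  have h2 : x ≡ y [MOD n] := Nat.ModEq.add_left_cancel' i h
  unfold Nat.ModEq at h2
  rw [Nat.mod_eq_of_lt hx, Nat.mod_eq_of_lt hy] at h2
  exact h2

lemma wheelClique_card (a l : ℕ) (ha : 1 ≤ a) (hal : a ≤ l) (h2 : 2 ≤ l) (i : ℕ) :
    (wheelClique l a i).card = a := by
  rw [wheelClique, Finset.card_insert_of_notMem, Finset.card_image_of_injOn,
    Finset.card_range]
  · omega
  · intro x hx y hy hxy
    exact mod_inj_aux (lt_of_lt_of_le (Finset.mem_range.mp hx) (by omega))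
      (lt_of_lt_of_le (Finset.mem_range.mp hy) (by omega)) hxy
  · simp only [Finset.mem_image, Finset.mem_range, not_exists, not_and]
    intro k _
    exact Nat.ne_of_lt (Nat.mod_lt _ (by omega))

lemma mem_wheelClique_self {a l j : ℕ} (ha : 2 ≤ a) (hj : j < l - 1) :
    j ∈ wheelClique l a j := by
  rw [wheelClique]
  refine Finset.mem_insert.mpr (Or.inr (Finset.mem_image.mpr
    ⟨0, Finset.mem_range.mpr (by omega), ?_⟩))
  rw [Nat.add_zero, Nat.mod_eq_of_lt hj]

lemma card_filter_mem_powersetCard (S : Finset ℕ) (j : ℕ) (hj : j ∈ S) (r : ℕ) (hr : 1 ≤ r) :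
    ((S.powersetCard r).filter (fun e => j ∈ e)).card = (S.card - 1).choose (r - 1) := by
  have key : ((S.powersetCard r).filter (fun e => j ∈ e)).card
      = ((S.erase j).powersetCard (r - 1)).card := by
    refine Finset.card_bij' (fun e _ => e.erase j) (fun s _ => insert j s) ?_ ?_ ?_ ?_
    · intro e he
      rw [Finset.mem_filter, Finset.mem_powersetCard] at he
      rw [Finset.mem_powersetCard]
      exact ⟨Finset.erase_subset_erase j he.1.1, by rw [Finset.card_erase_of_mem he.2, he.1.2]⟩
    · intro s hs
      rw [Finset.mem_powersetCard] at hs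
      have hjs : j ∉ s := fun h => Finset.notMem_erase j S (hs.1 h)
      rw [Finset.mem_filter, Finset.mem_powersetCard]
      refine ⟨⟨Finset.insert_subset hj (hs.1.trans (Finset.erase_subset j S)), ?_⟩,
        Finset.mem_insert_self j s⟩
      rw [Finset.card_insert_of_notMem hjs, hs.2]
      omega
    · intro e he
      rw [Finset.mem_filter] at he
      exact Finset.insert_erase he.2
    · intro s hs
      rw [Finset.mem_powersetCard] at hs
      have hjs : j ∉ s := fun h => Finset.notMem_erase j S (hs.1 h)
      exact Finset.erase_insert hjs
  rw [key, Finset.card_powersetCard, Finset.card_erase_of_mem hj]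

lemma wheel_shift (r a l : ℕ) (hr : 2 ≤ r) (hra : r < a) (hl : 2 * a - 1 ≤ l)
    (i : ℕ) (e : Finset ℕ) (he : e ⊆ wheelClique l a i) (hcard : e.card = r) :
    ∃ t, t ≤ a - r ∧ (i + t) % (l - 1) ∈ e ∧ e ⊆ wheelClique l a ((i + t) % (l - 1)) := by
  set T := (Finset.range (a - 1)).filter (fun k => (i + k) % (l - 1) ∈ e) with hT
  have hsub : e ⊆ insert (l - 1) (T.image fun k => (i + k) % (l - 1)) := by
    intro x hx
    rcases Finset.mem_insert.mp (he hx) with h | h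
    · exact Finset.mem_insert.mpr (Or.inl h)
    · obtain ⟨k, hk, hkx⟩ := Finset.mem_image.mp h
      refine Finset.mem_insert.mpr (Or.inr (Finset.mem_image.mpr ⟨k, ?_, hkx⟩))
      exact Finset.mem_filter.mpr ⟨hk, by rw [hkx]; exact hx⟩
  have hTcard : r - 1 ≤ T.card := by
    have himg : (T.image fun k => (i + k) % (l - 1)).card ≤ T.card := Finset.card_image_le
    have h1 : e.card ≤ (T.image fun k => (i + k) % (l - 1)).card + 1 :=
      le_trans (Finset.card_le_card hsub) (Finset.card_insert_le _ _)
    omega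
  have hTne : T.Nonempty := Finset.card_pos.mp (by omega)
  set t := T.min' hTne with htdef
  have htT : t ∈ T := T.min'_mem hTne
  have ht1 : t < a - 1 := Finset.mem_range.mp (Finset.mem_filter.mp htT).1
  have hte : (i + t) % (l - 1) ∈ e := (Finset.mem_filter.mp htT).2
  have htle : t ≤ a - r := by
    have hsubT : T ⊆ Finset.Ico t (a - 1) := by
      intro k hk
      exact Finset.mem_Ico.mpr ⟨T.min'_le k hk, Finset.mem_range.mp (Finset.mem_filter.mp hk).1⟩
    have := Finset.card_le_card hsubT
    rw [Nat.card_Ico] at this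
    omega
  refine ⟨t, htle, hte, ?_⟩
  intro x hx
  rcases Finset.mem_insert.mp (hsub hx) with h | h
  · exact Finset.mem_insert.mpr (Or.inl h)
  · obtain ⟨k, hkT, hkx⟩ := Finset.mem_image.mp h
    have hk1 : k < a - 1 := Finset.mem_range.mp (Finset.mem_filter.mp hkT).1
    have hkt : t ≤ k := T.min'_le k hkT
    refine Finset.mem_insert.mpr (Or.inr (Finset.mem_image.mpr
      ⟨k - t, Finset.mem_range.mpr (by omega), ?_⟩))
    rw [← hkx, Nat.mod_add_mod]
    congr 1
    omega

theorem wheel_cliqueFree_card_le (r a l : ℕ) (hr : 2 ≤ r) (hra : r < a) (hl : 2 * a - 1 ≤ l)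
    (F : Finset (Finset ℕ)) (hF : F ⊆ wheelEdges r a l) (hfree : HyperCliqueFree F a r) :
    F.card ≤ (a - 1).choose (r - 1) * (l - 1) - (l - 1 + (a - r)) / (a - r + 1) := by
  classical
  have ha : 3 ≤ a := by omega
  have hn0 : 0 < l - 1 := by omega
  set C := (a - 1).choose (r - 1) with hC
  set f : Finset ℕ → ℕ := fun e =>
    if h : ∃ j, j ∈ e ∧ e ⊆ wheelClique l a j ∧ j < l - 1 then h.choose else 0 with hf
  have hfP : ∀ e ∈ F, e.card = r ∧ f e ∈ e ∧ e ⊆ wheelClique l a (f e) ∧ f e < l - 1 := by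
    intro e heF
    have hew := hF heF
    simp only [wheelEdges, Finset.mem_biUnion, Finset.mem_range] at hew
    obtain ⟨i, hi, hei⟩ := hew
    rw [Finset.mem_powersetCard] at hei
    obtain ⟨t, ht, hmem, hsub⟩ := wheel_shift r a l hr hra hl i e hei.1 hei.2
    have hex : ∃ j, j ∈ e ∧ e ⊆ wheelClique l a j ∧ j < l - 1 :=
      ⟨(i + t) % (l - 1), hmem, hsub, Nat.mod_lt _ hn0⟩
    refine ⟨hei.2, ?_⟩
    simp only [hf, dif_pos hex]
    exact hex.choose_spec
  set A : ℕ → Finset (Finset ℕ) :=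
    fun j => ((wheelClique l a j).powersetCard r).filter (fun e => j ∈ e) with hA
  have hAcard : ∀ j < l - 1, (A j).card = C := by
    intro j hj
    simp only [hA]
    rw [card_filter_mem_powersetCard _ j (mem_wheelClique_self (by omega) hj) r (by omega),
      wheelClique_card a l (by omega) (by omega) (by omega) j]
  set fib : ℕ → Finset (Finset ℕ) := fun j => F.filter (fun e => f e = j) with hfib
  have hfibA : ∀ j, fib j ⊆ A j := by
    intro j e hefib
    simp only [hfib, Finset.mem_filter] at hefib
    obtain ⟨heF, hfe⟩ := hefib
    obtain ⟨hcard, hmem, hsub, _⟩ := hfP e heF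
    simp only [hA, Finset.mem_filter, Finset.mem_powersetCard]
    exact ⟨⟨hfe ▸ hsub, hcard⟩, hfe ▸ hmem⟩
  set D := (Finset.range (l - 1)).filter (fun j => (fib j).card < C) with hD
  have claimA : ∀ i < l - 1, ∃ t ≤ a - r, (i + t) % (l - 1) ∈ D := by
    intro i hi
    by_contra hcon
    push_neg at hcon
    have hfull : ∀ t ≤ a - r, A ((i + t) % (l - 1)) ⊆ F := by
      intro t ht
      have hj : (i + t) % (l - 1) < l - 1 := Nat.mod_lt _ hn0
      have h1 := hcon t ht
      rw [hD, Finset.mem_filter] at h1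
      push_neg at h1
      have h2 : C ≤ (fib ((i + t) % (l - 1))).card := h1 (Finset.mem_range.mpr hj)
      have h3 := Finset.eq_of_subset_of_card_le (hfibA ((i + t) % (l - 1)))
        (by rw [hAcard _ hj]; exact h2)
      rw [← h3]
      simp only [hfib]
      exact Finset.filter_subset _ F
    apply hfree
    refine ⟨wheelClique l a i, wheelClique_card a l (by omega) (by omega) (by omega) i, ?_⟩
    intro e he
    rw [Finset.mem_powersetCard] at he
    obtain ⟨t, ht, hmem, hsub⟩ := wheel_shift r a l hr hra hl i e he.1 he.2
    apply hfull t ht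
    simp only [hA, Finset.mem_filter, Finset.mem_powersetCard]
    exact ⟨⟨hsub, he.2⟩, hmem⟩
  have hDcard : l - 1 ≤ D.card * (a - r + 1) := by
    set g : ℕ → ℕ := fun j =>
      if h : ∃ t, t ≤ a - r ∧ (j + t) % (l - 1) ∈ D then (j + h.choose) % (l - 1) else 0 with hg
    have hgP : ∀ j ∈ Finset.range (l - 1), g j ∈ D ∧ ∃ t ≤ a - r, (j + t) % (l - 1) = g j := by
      intro j hj
      obtain ⟨t, ht, htD⟩ := claimA j (Finset.mem_range.mp hj)
      have hex : ∃ t, t ≤ a - r ∧ (j + t) % (l - 1) ∈ D := ⟨t, ht, htD⟩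
      simp only [hg, dif_pos hex]
      exact ⟨hex.choose_spec.2, hex.choose, hex.choose_spec.1, rfl⟩
    have hcount := Finset.card_eq_sum_card_fiberwise (fun j hj => (hgP j hj).1)
    rw [Finset.card_range] at hcount
    rw [hcount]
    have hfibg : ∀ i ∈ D, ((Finset.range (l - 1)).filter (fun j => g j = i)).card
        ≤ a - r + 1 := by
      intro i _
      have hsub2 : (Finset.range (l - 1)).filter (fun j => g j = i) ⊆
          (Finset.range (a - r + 1)).image (fun t => (i + ((l - 1) - t)) % (l - 1)) := by
        intro j hj
        rw [Finset.mem_filter] at hj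
        obtain ⟨hjr, hgj⟩ := hj
        obtain ⟨_, t, ht, hteq⟩ := hgP j hjr
        rw [hgj] at hteq
        refine Finset.mem_image.mpr ⟨t, Finset.mem_range.mpr (by omega), ?_⟩
        have heq : j + t + ((l - 1) - t) = j + (l - 1) := by omega
        rw [← hteq, Nat.mod_add_mod, heq, Nat.add_mod_right]
        exact Nat.mod_eq_of_lt (Finset.mem_range.mp hjr)
      calc ((Finset.range (l - 1)).filter (fun j => g j = i)).card
          ≤ ((Finset.range (a - r + 1)).image
              (fun t => (i + ((l - 1) - t)) % (l - 1))).card := Finset.card_le_card hsub2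
        _ ≤ (Finset.range (a - r + 1)).card := Finset.card_image_le
        _ = a - r + 1 := Finset.card_range _
    calc ∑ i ∈ D, ((Finset.range (l - 1)).filter (fun j => g j = i)).card
        ≤ ∑ _i ∈ D, (a - r + 1) := Finset.sum_le_sum hfibg
      _ = D.card * (a - r + 1) := by rw [Finset.sum_const, smul_eq_mul]
  have hDge : (l - 1 + (a - r)) / (a - r + 1) ≤ D.card := by
    have h1 : (l - 1 + (a - r)) / (a - r + 1) ≤ (D.card * (a - r + 1) + (a - r)) / (a - r + 1) :=
      Nat.div_le_div_right (by omega)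
    have h2 : (D.card * (a - r + 1) + (a - r)) / (a - r + 1) = D.card := by
      rw [Nat.mul_comm, Nat.mul_add_div (by omega), Nat.div_eq_of_lt (by omega), Nat.add_zero]
    omega
  have hsum : F.card = ∑ j ∈ Finset.range (l - 1), (fib j).card := by
    have := Finset.card_eq_sum_card_fiberwise
      (fun e (he : e ∈ F) => Finset.mem_range.mpr (hfP e he).2.2.2)
    simpa [hfib] using this
  have hDsum : D.card = ∑ j ∈ Finset.range (l - 1), (if (fib j).card < C then 1 else 0) := by
    rw [hD, Finset.card_filter]
  have hmain : F.card + D.card ≤ C * (l - 1) := by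
    rw [hsum, hDsum, ← Finset.sum_add_distrib]
    calc ∑ j ∈ Finset.range (l - 1), ((fib j).card + if (fib j).card < C then 1 else 0)
        ≤ ∑ _j ∈ Finset.range (l - 1), C := by
          apply Finset.sum_le_sum
          intro j hj
          have hle : (fib j).card ≤ C := by
            rw [← hAcard j (Finset.mem_range.mp hj)]
            exact Finset.card_le_card (hfibA j)
          split <;> omega
      _ = C * (l - 1) := by rw [Finset.sum_const, Finset.card_range, smul_eq_mul, Nat.mul_comm]
  exact Nat.le_sub_of_add_le (le_trans (by omega) hmain)
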